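/- arXiv:1311.2711 — 6 statements merged into one kernel-verified Lean document; each statement's English description precedes it below -/
import Mathlib

section
/- The algebra of invariants of the polynomial ring K[T_1,...,T_n,S_1,...,S_n] under the additive group action given by T_i ↦ T_i + k·S_i, S_i ↦ S_i (for k ∈ K) is generated by S_1,...,S_n together with the elements T_j·S_k − T_k·S_j for 1 ≤ j < k ≤ n. -/
open MvPolynomial Finsupp

set_option linter.unusedSectionVars false

namespace Stmt0Aux

variable {σ : Type*} {R : Type*} [CommRing R]

theorem pderiv_pderiv_comm (u v : σ) (f : MvPolynomial σ R) :
    pderiv u (pderiv v f) = pderiv v (pderiv u f) := by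
  classical
  induction f using MvPolynomial.induction_on' with
  | monomial m c =>
    by_cases huv : u = v
    · subst huv; rfl
    · simp only [pderiv_monomial]
      have h1 : (m - Finsupp.single v 1 : σ →₀ ℕ) u = m u := by
        rw [Finsupp.tsub_apply, Finsupp.single_apply, if_neg (Ne.symm huv)]
        rfl
      have h2 : (m - Finsupp.single u 1 : σ →₀ ℕ) v = m v := by
        rw [Finsupp.tsub_apply, Finsupp.single_apply, if_neg huv]
        rfl
      rw [h1, h2, tsub_right_comm]
      ring_nf
  | add p q hp hq => simp [map_add, hp, hq]

theorem X_mul_pderiv_monomial (v : σ) (m : σ →₀ ℕ) (c : R) :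
    X v * pderiv v (monomial m c) = m v • monomial m c := by
  classical
  rw [pderiv_monomial]
  by_cases h : m v = 0
  · simp [h]
  · have hle : Finsupp.single v 1 ≤ m := by
      rw [Finsupp.single_le_iff]
      omega
    have hm' : Finsupp.single v 1 + (m - Finsupp.single v 1) = m := by
      rw [add_comm]; exact tsub_add_cancel_of_le hle
    rw [X, monomial_mul, hm', smul_monomial]
    congr 1
    simp [nsmul_eq_mul]
    ring

theorem weight_single_one (w : σ → ℕ) (v : σ) :
    weight w (Finsupp.single v 1) = w v := by
  rw [weight_apply, Finsupp.sum_single_index] <;> simp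

theorem isWH_pderiv {w : σ → ℕ} {f : MvPolynomial σ R} {d : ℕ}
    (hf : IsWeightedHomogeneous w f d) (v : σ) :
    IsWeightedHomogeneous w (pderiv v f) (d - w v) := by
  classical
  conv => enter [2]; rw [← support_sum_monomial_coeff f]
  rw [map_sum]
  refine IsWeightedHomogeneous.sum _ _ _ fun m hm => ?_
  rw [pderiv_monomial]
  by_cases h : m v = 0
  · rw [h]; simp only [Nat.cast_zero, mul_zero, monomial_zero]
    exact isWeightedHomogeneous_zero _ _ _
  · refine isWeightedHomogeneous_monomial _ _ _ ?_
    have hle : Finsupp.single v 1 ≤ m := by rw [Finsupp.single_le_iff]; omega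
    have hsum : (m - Finsupp.single v 1) + Finsupp.single v 1 = m :=
      tsub_add_cancel_of_le hle
    have hw : weight w m = d := hf (MvPolynomial.mem_support_iff.mp hm)
    have := congrArg (weight w) hsum
    rw [map_add, weight_single_one, hw] at this
    omega

theorem isWH_wHC {w w' : σ → ℕ} {f : MvPolynomial σ R} {d : ℕ}
    (hf : IsWeightedHomogeneous w f d) (b : ℕ) :
    IsWeightedHomogeneous w (weightedHomogeneousComponent w' b f) d := by
  classical
  intro m hm
  rw [coeff_weightedHomogeneousComponent] at hm
  split_ifs at hm with h
  · exact hf hm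
  · exact absurd rfl hm

variable [Fintype σ]

theorem weight_eq_sum (w : σ → ℕ) (m : σ →₀ ℕ) :
    weight w m = ∑ v : σ, m v * w v := by
  rw [weight_apply, Finsupp.sum_fintype]
  · simp [smul_eq_mul]
  · intro v; simp

theorem pderiv_eq_zero_of_isWH_zero {w : σ → ℕ} {f : MvPolynomial σ R}
    (hf : IsWeightedHomogeneous w f 0) {v : σ} (hv : w v ≠ 0) :
    pderiv v f = 0 := by
  apply pderiv_eq_zero_of_notMem_vars
  rw [mem_vars]
  rintro ⟨m, hm, hvm⟩
  have h0 : weight w m = 0 := hf (MvPolynomial.mem_support_iff.mp hm)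
  rw [weight_eq_sum] at h0
  have := (Finset.sum_eq_zero_iff).mp h0 v (Finset.mem_univ v)
  have hmv : m v ≠ 0 := Finsupp.mem_support_iff.mp hvm
  rcases Nat.mul_eq_zero.mp this with h | h
  · exact hmv h
  · exact hv h

/-- Weighted Euler identity. -/
theorem euler {w : σ → ℕ} {f : MvPolynomial σ R} {d : ℕ}
    (hf : IsWeightedHomogeneous w f d) :
    ∑ v : σ, w v • (X v * pderiv v f) = d • f := by
  classical
  conv_lhs => rw [← support_sum_monomial_coeff f]
  conv_rhs => rw [← support_sum_monomial_coeff f]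
  rw [Finset.smul_sum]
  simp only [map_sum, Finset.mul_sum, Finset.smul_sum]
  rw [Finset.sum_comm]
  refine Finset.sum_congr rfl fun m hm => ?_
  have hw : weight w m = d := hf (MvPolynomial.mem_support_iff.mp hm)
  calc ∑ v : σ, w v • (X v * pderiv v (monomial m (coeff m f)))
      = ∑ v : σ, (m v * w v) • monomial m (coeff m f) := by
        refine Finset.sum_congr rfl fun v _ => ?_
        rw [X_mul_pderiv_monomial, smul_smul, mul_comm]
    _ = d • monomial m (coeff m f) := by
        rw [← Finset.sum_smul, ← weight_eq_sum, hw]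

end Stmt0Aux

namespace Stmt0Main

open Stmt0Aux

variable {K : Type*} [Field K] [CharZero K] {n : ℕ}

/-- weight function for the T-degree -/
def wT (n : ℕ) : Fin n ⊕ Fin n → ℕ := Sum.elim (fun _ => 1) (fun _ => 0)

/-- weight function for the S-degree -/
def wS (n : ℕ) : Fin n ⊕ Fin n → ℕ := Sum.elim (fun _ => 0) (fun _ => 1)

/-- The derivation `∑ Sᵢ ∂/∂Tᵢ`. -/
noncomputable def DD (f : MvPolynomial (Fin n ⊕ Fin n) K) : MvPolynomial (Fin n ⊕ Fin n) K :=
  ∑ i : Fin n, X (Sum.inr i) * pderiv (Sum.inl i) f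

variable (K n) in
/-- The candidate invariant subalgebra. -/
noncomputable def Bsub : Subalgebra K (MvPolynomial (Fin n ⊕ Fin n) K) :=
  Algebra.adjoin K
    ({f : MvPolynomial (Fin n ⊕ Fin n) K | ∃ i : Fin n, f = X (Sum.inr i)} ∪
     {f : MvPolynomial (Fin n ⊕ Fin n) K | ∃ j k : Fin n, j < k ∧
        f = X (Sum.inl j) * X (Sum.inr k) - X (Sum.inl k) * X (Sum.inr j)})

theorem Xinr_mem (i : Fin n) : (X (Sum.inr i) : MvPolynomial (Fin n ⊕ Fin n) K) ∈ Bsub K n :=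
  Algebra.subset_adjoin (Or.inl ⟨i, rfl⟩)

theorem minor_mem' (i j : Fin n) :
    (X (Sum.inl i) * X (Sum.inr j) - X (Sum.inl j) * X (Sum.inr i) :
      MvPolynomial (Fin n ⊕ Fin n) K) ∈ Bsub K n := by
  rcases lt_trichotomy i j with h | h | h
  · exact Algebra.subset_adjoin (Or.inr ⟨i, j, h, rfl⟩)
  · subst h; simp only [sub_self]; exact Subalgebra.zero_mem _
  · have : (X (Sum.inl i) * X (Sum.inr j) - X (Sum.inl j) * X (Sum.inr i) :
        MvPolynomial (Fin n ⊕ Fin n) K)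
        = -(X (Sum.inl j) * X (Sum.inr i) - X (Sum.inl i) * X (Sum.inr j)) := by ring
    rw [this]
    exact Subalgebra.neg_mem _ (Algebra.subset_adjoin (Or.inr ⟨j, i, h, rfl⟩))

theorem eulerT {f : MvPolynomial (Fin n ⊕ Fin n) K} {a : ℕ}
    (hf : IsWeightedHomogeneous (wT n) f a) :
    ∑ i : Fin n, X (Sum.inl i) * pderiv (Sum.inl i) f = a • f := by
  have h := euler hf
  rw [Fintype.sum_sum_type] at h
  simpa [wT] using h

theorem eulerS {f : MvPolynomial (Fin n ⊕ Fin n) K} {b : ℕ}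
    (hf : IsWeightedHomogeneous (wS n) f b) :
    ∑ i : Fin n, X (Sum.inr i) * pderiv (Sum.inr i) f = b • f := by
  have h := euler hf
  rw [Fintype.sum_sum_type] at h
  simpa [wS] using h

theorem base_mem {f : MvPolynomial (Fin n ⊕ Fin n) K}
    (hf : IsWeightedHomogeneous (wT n) f 0) : f ∈ Bsub K n := by
  classical
  conv => enter [2]; rw [← support_sum_monomial_coeff f]
  refine Subalgebra.sum_mem _ fun m hm => ?_
  rw [monomial_eq]
  refine Subalgebra.mul_mem _ ?_ ?_
  · exact Subalgebra.algebraMap_mem _ _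
  · refine Subalgebra.prod_mem _ fun v hv => ?_
    refine Subalgebra.pow_mem _ ?_ _
    have h0 : weight (wT n) m = 0 := hf (MvPolynomial.mem_support_iff.mp hm)
    rw [Stmt0Aux.weight_eq_sum] at h0
    have hz := (Finset.sum_eq_zero_iff).mp h0 v (Finset.mem_univ v)
    have hmv : m v ≠ 0 := Finsupp.mem_support_iff.mp hv
    match v with
    | Sum.inl i =>
      exfalso
      rcases Nat.mul_eq_zero.mp hz with h | h
      · exact hmv h
      · simp [wT] at h
    | Sum.inr i => exact Xinr_mem i

end Stmt0Main
namespace Stmt0Main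

variable {K : Type*} [Field K] [CharZero K] {n : ℕ}

theorem DD_sub (p q : MvPolynomial (Fin n ⊕ Fin n) K) : DD (p - q) = DD p - DD q := by
  simp [DD, map_sub, mul_sub, Finset.sum_sub_distrib]

/-- differentiating a sum `∑ Sₖ * g k` by an S-variable -/
theorem pderiv_inr_sum (g : Fin n → MvPolynomial (Fin n ⊕ Fin n) K) (j : Fin n) :
    pderiv (Sum.inr j) (∑ k : Fin n, X (Sum.inr k) * g k)
      = g j + ∑ k : Fin n, X (Sum.inr k) * pderiv (Sum.inr j) (g k) := by
  classical
  rw [map_sum]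
  have expand : ∀ k, pderiv (Sum.inr j) (X (Sum.inr k) * g k)
      = (if k = j then g k else 0) + X (Sum.inr k) * pderiv (Sum.inr j) (g k) := by
    intro k
    rw [pderiv_mul]
    congr 1
    by_cases h : k = j
    · subst h; rw [pderiv_X_self, if_pos rfl, one_mul]
    · rw [pderiv_X_of_ne (by simp [h]), if_neg h, zero_mul]
  rw [Finset.sum_congr rfl fun k _ => expand k, Finset.sum_add_distrib]
  congr 1
  simp

/-- differentiating a sum `∑ Sₖ * g k` by a T-variable -/
theorem pderiv_inl_sum (g : Fin n → MvPolynomial (Fin n ⊕ Fin n) K) (j : Fin n) :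
    pderiv (Sum.inl j) (∑ k : Fin n, X (Sum.inr k) * g k)
      = ∑ k : Fin n, X (Sum.inr k) * pderiv (Sum.inl j) (g k) := by
  rw [map_sum]
  refine Finset.sum_congr rfl fun k _ => ?_
  rw [pderiv_mul, pderiv_X_of_ne (by simp), zero_mul, zero_add]

theorem key (a : ℕ) : ∀ (b : ℕ) (f : MvPolynomial (Fin n ⊕ Fin n) K),
    IsWeightedHomogeneous (wT n) f a → IsWeightedHomogeneous (wS n) f b →
    DD f = 0 → f ∈ Bsub K n := by
  induction a with
  | zero => exact fun b f hfT _ _ => base_mem hfT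
  | succ a IH =>
    intro b f hfT hfS hE
    have hE' : ∑ j : Fin n, X (Sum.inr j) * pderiv (Sum.inl j) f = 0 := hE
    set A : Fin n → Fin n → MvPolynomial (Fin n ⊕ Fin n) K := fun i j =>
      pderiv (Sum.inr j) (pderiv (Sum.inl i) f)
        - pderiv (Sum.inr i) (pderiv (Sum.inl j) f) with hA
    have hpTS : ∀ i : Fin n, IsWeightedHomogeneous (wS n) (pderiv (Sum.inl i) f) b := by
      intro i
      have := Stmt0Aux.isWH_pderiv hfS (Sum.inl i)
      simpa [wS] using this
    have hpTT : ∀ i : Fin n, IsWeightedHomogeneous (wT n) (pderiv (Sum.inl i) f) a := by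
      intro i
      have := Stmt0Aux.isWH_pderiv hfT (Sum.inl i)
      simpa [wT] using this
    have eulerT' : ∑ i : Fin n, X (Sum.inl i) * pderiv (Sum.inl i) f = (a + 1) • f := eulerT hfT
    have eulerS_pT : ∀ i : Fin n,
        ∑ j : Fin n, X (Sum.inr j) * pderiv (Sum.inr j) (pderiv (Sum.inl i) f)
          = b • pderiv (Sum.inl i) f := fun i => eulerS (hpTS i)
    have step3 : ∀ i : Fin n,
        ∑ j : Fin n, X (Sum.inr j) * pderiv (Sum.inr i) (pderiv (Sum.inl j) f)
          = - pderiv (Sum.inl i) f := by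
      intro i
      have h0 := congrArg (pderiv (Sum.inr i)) hE'
      rw [pderiv_inr_sum, map_zero] at h0
      linear_combination h0
    have main4 : ∑ i : Fin n, ∑ j : Fin n, A i j * (X (Sum.inl i) * X (Sum.inr j))
        = ((a + 1) * (b + 1)) • f := by
      have per_i : ∀ i : Fin n, ∑ j : Fin n, A i j * (X (Sum.inl i) * X (Sum.inr j))
          = b • (X (Sum.inl i) * pderiv (Sum.inl i) f)
            + X (Sum.inl i) * pderiv (Sum.inl i) f := by
        intro i
        have expand : ∀ j : Fin n, A i j * (X (Sum.inl i) * X (Sum.inr j))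
            = X (Sum.inl i) * (X (Sum.inr j) * pderiv (Sum.inr j) (pderiv (Sum.inl i) f))
              - X (Sum.inl i) * (X (Sum.inr j) * pderiv (Sum.inr i) (pderiv (Sum.inl j) f)) := by
          intro j; rw [hA]; ring
        rw [Finset.sum_congr rfl fun j _ => expand j, Finset.sum_sub_distrib,
          ← Finset.mul_sum, ← Finset.mul_sum, eulerS_pT i, step3 i]
        rw [mul_smul_comm, mul_neg, sub_neg_eq_add]
      rw [Finset.sum_congr rfl fun i _ => per_i i, Finset.sum_add_distrib,
        ← Finset.smul_sum, eulerT', smul_smul, ← add_smul]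
      congr 1
      ring
    have swap5 : ∑ i : Fin n, ∑ j : Fin n, A i j * (X (Sum.inl j) * X (Sum.inr i))
        = - ∑ i : Fin n, ∑ j : Fin n, A i j * (X (Sum.inl i) * X (Sum.inr j)) := by
      rw [Finset.sum_comm]
      have hterm : ∀ j i : Fin n, A i j * (X (Sum.inl j) * X (Sum.inr i))
          = -(A j i * (X (Sum.inl j) * X (Sum.inr i))) := by
        intro j i; rw [hA]; ring
      rw [Finset.sum_congr rfl fun j _ => Finset.sum_congr rfl fun i _ => hterm j i]
      simp only [Finset.sum_neg_distrib]
    have big : ∑ i : Fin n, ∑ j : Fin n,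
        A i j * (X (Sum.inl i) * X (Sum.inr j) - X (Sum.inl j) * X (Sum.inr i))
        = (2 * ((a + 1) * (b + 1))) • f := by
      simp only [mul_sub, Finset.sum_sub_distrib]
      rw [swap5, sub_neg_eq_add, main4, two_mul, add_smul]
    -- D-invariance of the coefficients A i j
    have claim1 : ∀ i0 : Fin n,
        ∑ k : Fin n, X (Sum.inr k) * pderiv (Sum.inl k) (pderiv (Sum.inl i0) f) = 0 := by
      intro i0
      have h0 := congrArg (pderiv (Sum.inl i0)) hE'
      rw [pderiv_inl_sum, map_zero] at h0
      calc ∑ k : Fin n, X (Sum.inr k) * pderiv (Sum.inl k) (pderiv (Sum.inl i0) f)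
          = ∑ k : Fin n, X (Sum.inr k) * pderiv (Sum.inl i0) (pderiv (Sum.inl k) f) := by
            refine Finset.sum_congr rfl fun k _ => ?_
            rw [Stmt0Aux.pderiv_pderiv_comm]
        _ = 0 := h0
    have claim2 : ∀ i0 j0 : Fin n, DD (pderiv (Sum.inr j0) (pderiv (Sum.inl i0) f))
        = - pderiv (Sum.inl j0) (pderiv (Sum.inl i0) f) := by
      intro i0 j0
      have hc := congrArg (pderiv (Sum.inr j0)) (claim1 i0)
      rw [pderiv_inr_sum, map_zero] at hc
      show ∑ k : Fin n, X (Sum.inr k) * pderiv (Sum.inl k) (pderiv (Sum.inr j0) (pderiv (Sum.inl i0) f)) = _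
      calc ∑ k : Fin n, X (Sum.inr k) * pderiv (Sum.inl k) (pderiv (Sum.inr j0) (pderiv (Sum.inl i0) f))
          = ∑ k : Fin n, X (Sum.inr k) * pderiv (Sum.inr j0) (pderiv (Sum.inl k) (pderiv (Sum.inl i0) f)) := by
            refine Finset.sum_congr rfl fun k _ => ?_
            rw [Stmt0Aux.pderiv_pderiv_comm]
        _ = - pderiv (Sum.inl j0) (pderiv (Sum.inl i0) f) := by linear_combination hc
    have hDD_A : ∀ i j : Fin n, DD (A i j) = 0 := by
      intro i j
      rw [hA]
      show DD (pderiv (Sum.inr j) (pderiv (Sum.inl i) f)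
        - pderiv (Sum.inr i) (pderiv (Sum.inl j) f)) = 0
      rw [DD_sub, claim2 i j, claim2 j i,
        show pderiv (Sum.inl i) (pderiv (Sum.inl j) f)
          = pderiv (Sum.inl j) (pderiv (Sum.inl i) f) from Stmt0Aux.pderiv_pderiv_comm _ _ _]
      ring
    have hmemA : ∀ i j : Fin n, A i j ∈ Bsub K n := by
      intro i j
      cases b with
      | zero =>
        have hz : ∀ i0 j0 : Fin n, pderiv (Sum.inr j0) (pderiv (Sum.inl i0) f) = 0 := fun i0 j0 =>
          Stmt0Aux.pderiv_eq_zero_of_isWH_zero (hpTS i0) (by simp [wS])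
        rw [hA]
        show pderiv (Sum.inr j) (pderiv (Sum.inl i) f)
          - pderiv (Sum.inr i) (pderiv (Sum.inl j) f) ∈ Bsub K n
        rw [hz i j, hz j i, sub_zero]
        exact Subalgebra.zero_mem _
      | succ b' =>
        refine IH b' (A i j) ?_ ?_ (hDD_A i j)
        · rw [← mem_weightedHomogeneousSubmodule]
          refine Submodule.sub_mem _ ?_ ?_
          · have := Stmt0Aux.isWH_pderiv (hpTT i) (Sum.inr j)
            simpa [wT] using this
          · have := Stmt0Aux.isWH_pderiv (hpTT j) (Sum.inr i)
            simpa [wT] using this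
        · rw [← mem_weightedHomogeneousSubmodule]
          refine Submodule.sub_mem _ ?_ ?_
          · have := Stmt0Aux.isWH_pderiv (hpTS i) (Sum.inr j)
            simpa [wS] using this
          · have := Stmt0Aux.isWH_pderiv (hpTS j) (Sum.inr i)
            simpa [wS] using this
    have hNK : ((2 * ((a + 1) * (b + 1)) : ℕ) : K) ≠ 0 :=
      Nat.cast_ne_zero.mpr (by positivity)
    have hf_eq : f = (((2 * ((a + 1) * (b + 1)) : ℕ) : K))⁻¹ • ∑ i : Fin n, ∑ j : Fin n,
        A i j * (X (Sum.inl i) * X (Sum.inr j) - X (Sum.inl j) * X (Sum.inr i)) := by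
      rw [big, ← Nat.cast_smul_eq_nsmul K, smul_smul, inv_mul_cancel₀ hNK, one_smul]
    rw [hf_eq]
    exact Subalgebra.smul_mem _ (Subalgebra.sum_mem _ fun i _ => Subalgebra.sum_mem _
      fun j _ => Subalgebra.mul_mem _ (hmemA i j) (minor_mem' i j)) _

end Stmt0Main
namespace Stmt0Main

variable {K : Type*} [Field K] [CharZero K] {n : ℕ}

theorem DD_zero : DD (0 : MvPolynomial (Fin n ⊕ Fin n) K) = 0 := by
  simp [DD]

theorem DD_sum' {ι : Type*} (s : Finset ι) (g : ι → MvPolynomial (Fin n ⊕ Fin n) K) :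
    DD (∑ x ∈ s, g x) = ∑ x ∈ s, DD (g x) := by
  simp only [DD, map_sum, Finset.mul_sum]
  rw [Finset.sum_comm]

theorem isWH_DD_T {f : MvPolynomial (Fin n ⊕ Fin n) K} {a : ℕ}
    (hf : IsWeightedHomogeneous (wT n) f a) :
    IsWeightedHomogeneous (wT n) (DD f) (a - 1) := by
  refine IsWeightedHomogeneous.sum _ _ _ fun i _ => ?_
  have h1 : IsWeightedHomogeneous (wT n) (X (Sum.inr i) : MvPolynomial (Fin n ⊕ Fin n) K) 0 := by
    simpa [wT] using isWeightedHomogeneous_X (R := K) (wT n) (Sum.inr i)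
  have h2 := Stmt0Aux.isWH_pderiv hf (Sum.inl i)
  have h3 := h1.mul h2
  simpa [wT] using h3

theorem isWH_DD_S {f : MvPolynomial (Fin n ⊕ Fin n) K} {b : ℕ}
    (hf : IsWeightedHomogeneous (wS n) f b) :
    IsWeightedHomogeneous (wS n) (DD f) (b + 1) := by
  refine IsWeightedHomogeneous.sum _ _ _ fun i _ => ?_
  have h1 : IsWeightedHomogeneous (wS n) (X (Sum.inr i) : MvPolynomial (Fin n ⊕ Fin n) K) 1 := by
    simpa [wS] using isWeightedHomogeneous_X (R := K) (wS n) (Sum.inr i)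
  have h2 := Stmt0Aux.isWH_pderiv hf (Sum.inl i)
  have h3 := h1.mul h2
  have : (1 : ℕ) + (b - wS n (Sum.inl i)) = b + 1 := by simp [wS]; omega
  rwa [this] at h3

theorem DD_of_T0 {f : MvPolynomial (Fin n ⊕ Fin n) K}
    (hf : IsWeightedHomogeneous (wT n) f 0) : DD f = 0 := by
  have hz : ∀ i : Fin n, pderiv (Sum.inl i) f = 0 := fun i =>
    Stmt0Aux.pderiv_eq_zero_of_isWH_zero hf (by simp [wT])
  simp [DD, hz]

theorem mem_of_DD_eq_zero {f : MvPolynomial (Fin n ⊕ Fin n) K}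
    (hf : DD f = 0) : f ∈ Bsub K n := by
  classical
  suffices H : ∀ (a : ℕ) (g : MvPolynomial (Fin n ⊕ Fin n) K),
      IsWeightedHomogeneous (wT n) g a → DD g = 0 → g ∈ Bsub K n by
    have hfin : (Function.support fun m =>
        weightedHomogeneousComponent (wT n) m f).Finite :=
      weightedHomogeneousComponent_finsupp f
    have hsum : ∑ m ∈ hfin.toFinset, weightedHomogeneousComponent (wT n) m f = f := by
      rw [← finsum_eq_sum _ hfin, sum_weightedHomogeneousComponent]
    have hDDsum : ∑ m ∈ hfin.toFinset, DD (weightedHomogeneousComponent (wT n) m f) = 0 := by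
      rw [← DD_sum', hsum, hf]
    have hpieces : ∀ a, DD (weightedHomogeneousComponent (wT n) a f) = 0 := by
      intro a
      by_cases ha : a ∈ hfin.toFinset
      · cases a with
        | zero => exact DD_of_T0 (weightedHomogeneousComponent_isWeightedHomogeneous 0 f)
        | succ a' =>
          have hext := congrArg (weightedHomogeneousComponent (wT n) a') hDDsum
          rw [map_sum, map_zero] at hext
          rw [Finset.sum_eq_single (a' + 1)] at hext
          · have hhom : IsWeightedHomogeneous (wT n)
                (DD (weightedHomogeneousComponent (wT n) (a' + 1) f)) a' := by
              simpa using isWH_DD_T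
                (weightedHomogeneousComponent_isWeightedHomogeneous (a' + 1) f)
            rwa [IsWeightedHomogeneous.weightedHomogeneousComponent_same hhom] at hext
          · intro m _ hne
            cases m with
            | zero =>
              rw [DD_of_T0 (weightedHomogeneousComponent_isWeightedHomogeneous 0 f), map_zero]
            | succ m' =>
              have hh : IsWeightedHomogeneous (wT n)
                  (DD (weightedHomogeneousComponent (wT n) (m' + 1) f)) m' := by
                simpa using isWH_DD_T
                  (weightedHomogeneousComponent_isWeightedHomogeneous (m' + 1) f)
              exact IsWeightedHomogeneous.weightedHomogeneousComponent_ne _ hh (by omega)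
          · intro h; exact absurd ha h
      · have h0 : weightedHomogeneousComponent (wT n) a f = 0 := by
          by_contra hne
          exact ha (hfin.mem_toFinset.mpr hne)
        rw [h0, DD_zero]
    rw [← hsum]
    exact Subalgebra.sum_mem _ fun a _ =>
      H a _ (weightedHomogeneousComponent_isWeightedHomogeneous a f) (hpieces a)
  intro a g hg hDg
  have hfin : (Function.support fun m =>
      weightedHomogeneousComponent (wS n) m g).Finite :=
    weightedHomogeneousComponent_finsupp g
  have hsum : ∑ m ∈ hfin.toFinset, weightedHomogeneousComponent (wS n) m g = g := by
    rw [← finsum_eq_sum _ hfin, sum_weightedHomogeneousComponent]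
  have hDDsum : ∑ m ∈ hfin.toFinset, DD (weightedHomogeneousComponent (wS n) m g) = 0 := by
    rw [← DD_sum', hsum, hDg]
  have hpieces : ∀ b, DD (weightedHomogeneousComponent (wS n) b g) = 0 := by
    intro b
    by_cases hb : b ∈ hfin.toFinset
    · have hext := congrArg (weightedHomogeneousComponent (wS n) (b + 1)) hDDsum
      rw [map_sum, map_zero] at hext
      rw [Finset.sum_eq_single b] at hext
      · rwa [IsWeightedHomogeneous.weightedHomogeneousComponent_same
          (isWH_DD_S (weightedHomogeneousComponent_isWeightedHomogeneous b g))] at hext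
      · intro m _ hne
        refine IsWeightedHomogeneous.weightedHomogeneousComponent_ne _
          (isWH_DD_S (weightedHomogeneousComponent_isWeightedHomogeneous m g)) ?_
        omega
      · intro h; exact absurd hb h
    · have h0 : weightedHomogeneousComponent (wS n) b g = 0 := by
        by_contra hne
        exact hb (hfin.mem_toFinset.mpr hne)
      rw [h0, DD_zero]
  rw [← hsum]
  refine Subalgebra.sum_mem _ fun b _ => ?_
  exact key a b _ (Stmt0Aux.isWH_wHC hg b)
    (weightedHomogeneousComponent_isWeightedHomogeneous b g) (hpieces b)

end Stmt0Main
namespace Stmt0Main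

variable {K : Type*} [Field K] [CharZero K] {n : ℕ}

/-- The generic translation `Tᵢ ↦ Tᵢ + t Sᵢ` with a polynomial parameter `t`. -/
noncomputable def Phi : MvPolynomial (Fin n ⊕ Fin n) K →ₐ[K]
    Polynomial (MvPolynomial (Fin n ⊕ Fin n) K) :=
  aeval (Sum.elim
    (fun i => Polynomial.C (X (Sum.inl i)) + Polynomial.X * Polynomial.C (X (Sum.inr i)))
    (fun i => Polynomial.C (X (Sum.inr i))))

theorem Phi_coeff_zero (f : MvPolynomial (Fin n ⊕ Fin n) K) : (Phi f).coeff 0 = f := by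
  induction f using MvPolynomial.induction_on with
  | C a => simp [Phi, algebraMap_eq]
  | add p q hp hq => simp [map_add, Polynomial.coeff_add, hp, hq]
  | mul_X p v hp =>
    rw [map_mul, Polynomial.mul_coeff_zero, hp]
    congr 1
    cases v with
    | inl i => simp [Phi]
    | inr i => simp [Phi]

theorem coeff_one_mul' (u v : Polynomial (MvPolynomial (Fin n ⊕ Fin n) K)) :
    (u * v).coeff 1 = u.coeff 0 * v.coeff 1 + u.coeff 1 * v.coeff 0 := by
  rw [Polynomial.coeff_mul, Finset.Nat.sum_antidiagonal_eq_sum_range_succ_mk]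
  rw [Finset.sum_range_succ, Finset.sum_range_one]

theorem DD_X (v : Fin n ⊕ Fin n) :
    ∑ i : Fin n, X (Sum.inr i) * pderiv (Sum.inl i) (X v : MvPolynomial (Fin n ⊕ Fin n) K)
      = Sum.elim (fun j => (X (Sum.inr j) : MvPolynomial (Fin n ⊕ Fin n) K)) (fun _ => 0) v := by
  classical
  cases v with
  | inl j =>
    rw [show (Sum.elim (fun j => (X (Sum.inr j) : MvPolynomial (Fin n ⊕ Fin n) K))
      (fun _ => 0) (Sum.inl j)) = X (Sum.inr j) from rfl]
    rw [Finset.sum_eq_single j]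
    · rw [pderiv_X_self, mul_one]
    · intro i _ hne
      rw [pderiv_X_of_ne (by simp [hne.symm]), mul_zero]
    · intro h; exact absurd (Finset.mem_univ j) h
  | inr j =>
    rw [show (Sum.elim (fun j => (X (Sum.inr j) : MvPolynomial (Fin n ⊕ Fin n) K))
      (fun _ => 0) (Sum.inr j)) = 0 from rfl]
    refine Finset.sum_eq_zero fun i _ => ?_
    rw [pderiv_X_of_ne (by simp), mul_zero]

theorem Phi_coeff_one (f : MvPolynomial (Fin n ⊕ Fin n) K) : (Phi f).coeff 1 = DD f := by
  induction f using MvPolynomial.induction_on with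
  | C a => simp [Phi, algebraMap_eq, DD]
  | add p q hp hq => simp [map_add, Polynomial.coeff_add, hp, hq, DD, pderiv_mul, map_add,
      mul_add, Finset.sum_add_distrib]
  | mul_X p v hp =>
    rw [map_mul, coeff_one_mul', hp, Phi_coeff_zero]
    have hDD : DD (p * X v) = DD p * X v + p * (Sum.elim
        (fun j => (X (Sum.inr j) : MvPolynomial (Fin n ⊕ Fin n) K)) (fun _ => 0) v) := by
      rw [← DD_X v]
      simp only [DD, pderiv_mul, mul_add, Finset.sum_add_distrib, Finset.mul_sum]
      congr 1
      · rw [Finset.sum_mul]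
        refine Finset.sum_congr rfl fun i _ => by ring
      · refine Finset.sum_congr rfl fun i _ => by ring
    rw [hDD]
    have hc0 : (Phi (X v : MvPolynomial (Fin n ⊕ Fin n) K)).coeff 0 = X v := Phi_coeff_zero _
    have hc1 : (Phi (X v : MvPolynomial (Fin n ⊕ Fin n) K)).coeff 1
        = Sum.elim (fun j => (X (Sum.inr j) : MvPolynomial (Fin n ⊕ Fin n) K)) (fun _ => 0) v := by
      cases v with
      | inl i => simp [Phi]
      | inr i => simp [Phi]
    rw [hc0, hc1]
    ring

theorem DD_eq_zero_of_invariant (f : MvPolynomial (Fin n ⊕ Fin n) K)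
    (h : ∀ k : K,
      aeval (Sum.elim
        (fun i => (X (Sum.inl i) : MvPolynomial (Fin n ⊕ Fin n) K) + C k * X (Sum.inr i))
        (fun i => (X (Sum.inr i) : MvPolynomial (Fin n ⊕ Fin n) K))) f = f) :
    DD f = 0 := by
  have heval : ∀ k : K, Polynomial.eval (C k : MvPolynomial (Fin n ⊕ Fin n) K) (Phi f) = f := by
    intro k
    have hcomp : (((Polynomial.aeval (C k : MvPolynomial (Fin n ⊕ Fin n) K)).restrictScalars K).comp
        Phi : MvPolynomial (Fin n ⊕ Fin n) K →ₐ[K] MvPolynomial (Fin n ⊕ Fin n) K)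
        = aeval (Sum.elim
          (fun i => (X (Sum.inl i) : MvPolynomial (Fin n ⊕ Fin n) K) + C k * X (Sum.inr i))
          (fun i => (X (Sum.inr i) : MvPolynomial (Fin n ⊕ Fin n) K))) := by
      apply MvPolynomial.algHom_ext
      intro v
      cases v with
      | inl i =>
        simp only [AlgHom.comp_apply, AlgHom.coe_restrictScalars', Phi, aeval_X, Sum.elim_inl,
          map_add, map_mul, Polynomial.aeval_C, Polynomial.aeval_X]
        simp only [Algebra.algebraMap_self_apply]
        try ring
      | inr i =>
        simp only [AlgHom.comp_apply, AlgHom.coe_restrictScalars', Phi, aeval_X, Sum.elim_inr,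
          Polynomial.aeval_C]
        simp [Algebra.algebraMap_self_apply]
    have := congrArg (fun ψ => ψ f) hcomp
    simp only [AlgHom.comp_apply, AlgHom.coe_restrictScalars'] at this
    rw [h k] at this
    rw [← Polynomial.coe_aeval_eq_eval]
    exact this
  have hroot : ∀ k : K,
      (Phi f - Polynomial.C f).IsRoot (C k : MvPolynomial (Fin n ⊕ Fin n) K) := by
    intro k
    show Polynomial.eval _ _ = 0
    rw [Polynomial.eval_sub, heval k, Polynomial.eval_C, sub_self]
  have hP : Phi f - Polynomial.C f = 0 := by
    apply Polynomial.eq_zero_of_infinite_isRoot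
    apply Set.Infinite.mono
      (s := Set.range (fun k : K => (C k : MvPolynomial (Fin n ⊕ Fin n) K)))
    · rintro x ⟨k, rfl⟩
      exact hroot k
    · exact Set.infinite_range_of_injective (C_injective _ _)
  have h1 := congrArg (fun p => Polynomial.coeff p 1) hP
  simp only [Polynomial.coeff_sub, Polynomial.coeff_C, Polynomial.coeff_zero] at h1
  rw [Phi_coeff_one] at h1
  simpa using h1

theorem invariant_of_mem (f : MvPolynomial (Fin n ⊕ Fin n) K) (hf : f ∈ Bsub K n) (k : K) :
    aeval (Sum.elim
      (fun i => (X (Sum.inl i) : MvPolynomial (Fin n ⊕ Fin n) K) + C k * X (Sum.inr i))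
      (fun i => (X (Sum.inr i) : MvPolynomial (Fin n ⊕ Fin n) K))) f = f := by
  set φ := (aeval (Sum.elim
      (fun i => (X (Sum.inl i) : MvPolynomial (Fin n ⊕ Fin n) K) + C k * X (Sum.inr i))
      (fun i => (X (Sum.inr i) : MvPolynomial (Fin n ⊕ Fin n) K))) :
    MvPolynomial (Fin n ⊕ Fin n) K →ₐ[K] MvPolynomial (Fin n ⊕ Fin n) K) with hφ
  have hle : Bsub K n ≤ AlgHom.equalizer φ (AlgHom.id K (MvPolynomial (Fin n ⊕ Fin n) K)) := by
    rw [Bsub]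
    apply Algebra.adjoin_le
    rintro g (⟨i, rfl⟩ | ⟨i, j, hij, rfl⟩)
    · show φ (X (Sum.inr i)) = X (Sum.inr i)
      rw [hφ]
      simp
    · show φ _ = _
      rw [hφ]
      simp only [map_sub, map_mul, aeval_X, Sum.elim_inl, Sum.elim_inr,
        AlgHom.coe_id, id_eq]
      ring
  exact hle hf

end Stmt0Main

/-- The invariant algebra of `K[T₁,…,Tₙ,S₁,…,Sₙ]` under the `𝔾ₐ`-action
`Tᵢ ↦ Tᵢ + k·Sᵢ`, `Sᵢ ↦ Sᵢ` is generated by the `Sᵢ` and the `TⱼSₖ − TₖSⱼ`. -/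
theorem stmt_0 {K : Type*} [Field K] [IsAlgClosed K] [CharZero K] (n : ℕ) :
    {f : MvPolynomial (Fin n ⊕ Fin n) K |
      ∀ k : K,
        aeval (Sum.elim
          (fun i => (X (Sum.inl i) : MvPolynomial (Fin n ⊕ Fin n) K) + C k * X (Sum.inr i))
          (fun i => (X (Sum.inr i) : MvPolynomial (Fin n ⊕ Fin n) K))) f = f}
    = (Algebra.adjoin K
        ({f : MvPolynomial (Fin n ⊕ Fin n) K | ∃ i : Fin n, f = X (Sum.inr i)} ∪
         {f : MvPolynomial (Fin n ⊕ Fin n) K | ∃ j k : Fin n, j < k ∧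
            f = X (Sum.inl j) * X (Sum.inr k) - X (Sum.inl k) * X (Sum.inr j)}) :
        Subalgebra K (MvPolynomial (Fin n ⊕ Fin n) K)) := by
  ext f
  simp only [Set.mem_setOf_eq, SetLike.mem_coe]
  constructor
  · intro hf
    exact Stmt0Main.mem_of_DD_eq_zero (Stmt0Main.DD_eq_zero_of_invariant f hf)
  · intro hf k
    exact Stmt0Main.invariant_of_mem f hf k
end

section
/- Let I ⊆ {{i,j} : 0 ≤ i < j ≤ n} be a set of pairs satisfying the exchange condition: whenever {i,j} ∈ I and {k,l} ∈ I, then ({j,l} ∈ I and {i,k} ∈ I) or ({j,k} ∈ I and {i,l} ∈ I). Then if additionally there exists k with {0,k} ∈ I, there exist vectors x, y ∈ K^n (with K infinite) such that the 2-vector z = (1,x) ∧ (0,y) ∈ ⋀²K^{n+1} has z_{ij} ≠ 0 if and only if {i,j} ∈ I. -/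
/-- Coordinate model of the wedge `u ∧ v` of two vectors: `(u ∧ v)ᵢⱼ = uᵢvⱼ − uⱼvᵢ`. -/
def wedge {K : Type*} [Field K] {m : ℕ} (u v : Fin m → K) : Fin m → Fin m → K :=
  fun i j => u i * v j - u j * v i

/-- If a set `I` of 2-element subsets of `{0,…,n}` satisfies the exchange condition (*)
and contains a pair `{0,k}`, then (over an infinite field) there are `x, y ∈ Kⁿ` such
that `z = (1,x) ∧ (0,y)` has `z_{ij} ≠ 0` exactly for `{i,j} ∈ I`. -/
theorem stmt_5 {K : Type*} [Field K] [Infinite K] (n : ℕ) (hn : 2 ≤ n)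
    (I : Set (Sym2 (Fin (n + 1))))
    (hdiag : ∀ i : Fin (n + 1), s(i, i) ∉ I)
    (hex : ∀ i j k l : Fin (n + 1), s(i, j) ∈ I → s(k, l) ∈ I →
      (s(j, l) ∈ I ∧ s(i, k) ∈ I) ∨ (s(j, k) ∈ I ∧ s(i, l) ∈ I))
    (h0 : ∃ k : Fin (n + 1), s((0 : Fin (n + 1)), k) ∈ I) :
    ∃ x y : Fin n → K, ∀ i j : Fin (n + 1),
      wedge (Fin.cons 1 x) (Fin.cons 0 y) i j ≠ 0 ↔ s(i, j) ∈ I := by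
  classical
  obtain ⟨k₀, hk₀⟩ := h0
  -- support predicate
  set Vp : Fin (n + 1) → Prop := fun i => ∃ j, s(i, j) ∈ I with hVp
  have symmI : ∀ a b : Fin (n + 1), s(a, b) = s(b, a) := fun a b => Sym2.eq_swap
  have hVsym : ∀ {a b : Fin (n + 1)}, s(a, b) ∈ I → Vp b := by
    intro a b h; exact ⟨a, by rwa [symmI b a]⟩
  have hVsym' : ∀ {a b : Fin (n + 1)}, s(a, b) ∈ I → Vp a := fun h => ⟨_, h⟩
  have h0V : Vp 0 := ⟨k₀, hk₀⟩
  -- transitivity of non-adjacency through a support vertex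
  have htrans : ∀ a b c : Fin (n + 1), Vp b → s(a, b) ∉ I → s(b, c) ∉ I → s(a, c) ∉ I := by
    intro a b c hb hab hbc hac
    obtain ⟨m, hm⟩ := hb
    rcases hex a c b m hac hm with ⟨h1, h2⟩ | ⟨h1, h2⟩
    · exact hab h2
    · exact hbc (by rwa [symmI c b] at h1)
  -- equivalence classes: minimal representative
  set S : Fin (n + 1) → Finset (Fin (n + 1)) :=
    fun i => Finset.univ.filter (fun j => s(i, j) ∉ I ∧ Vp j) with hS
  have hSne : ∀ i, Vp i → (S i).Nonempty := by
    intro i hi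
    exact ⟨i, by simp [hS, hdiag i, hi]⟩
  set rep : Fin (n + 1) → Fin (n + 1) :=
    fun i => if h : (S i).Nonempty then (S i).min' h else 0 with hrep
  have hrepMem : ∀ i, Vp i → s(i, rep i) ∉ I ∧ Vp (rep i) := by
    intro i hi
    have h := hSne i hi
    have hm : rep i ∈ S i := by
      simp only [hrep, dif_pos h]
      exact (S i).min'_mem h
    simpa [hS] using hm
  have hSeq : ∀ i j, Vp i → Vp j → s(i, j) ∉ I → S i = S j := by
    intro i j hi hj hij
    ext j'
    simp only [hS, Finset.mem_filter, Finset.mem_univ, true_and]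
    constructor
    · rintro ⟨h1, h2⟩
      exact ⟨htrans j i j' hi (by rwa [symmI j i]) h1, h2⟩
    · rintro ⟨h1, h2⟩
      exact ⟨htrans i j j' hj hij h1, h2⟩
  have hrepEq : ∀ i j, Vp i → Vp j → (s(i, j) ∉ I ↔ rep i = rep j) := by
    intro i j hi hj
    constructor
    · intro hij
      have h' := hSeq i j hi hj hij
      simp only [hrep, h']
    · intro hr
      obtain ⟨h1, h2⟩ := hrepMem i hi
      obtain ⟨h3, h4⟩ := hrepMem j hj
      have h3' : s(rep i, j) ∉ I := by rw [hr, symmI]; exact h3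
      exact htrans i (rep i) j h2 h1 h3'
  -- the slopes
  set e : ℕ ↪ K := Infinite.natEmbedding K with he
  set w : Fin (n + 1) → K × K := fun i =>
    if Vp i then (if s(0, i) ∈ I then (e (rep i), 1) else (1, 0)) else (0, 0) with hw
  have hw0 : w 0 = (1, 0) := by
    simp only [hw]
    rw [if_pos h0V, if_neg (hdiag 0)]
  -- the key determinant lemma
  have key : ∀ i j : Fin (n + 1),
      (w i).1 * (w j).2 - (w j).1 * (w i).2 ≠ 0 ↔ s(i, j) ∈ I := by
    intro i j
    by_cases hi : Vp i
    · by_cases hj : Vp j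
      · by_cases h0i : s(0, i) ∈ I
        · by_cases h0j : s(0, j) ∈ I
          · -- both non-class-0
            simp only [hw, if_pos hi, if_pos hj, if_pos h0i, if_pos h0j]
            show e (rep i) * 1 - e (rep j) * 1 ≠ 0 ↔ s(i, j) ∈ I
            rw [mul_one, mul_one, sub_ne_zero, Ne, e.injective.eq_iff, Fin.val_inj,
              ← hrepEq i j hi hj, not_not]
          · -- i non-class-0, j class 0
            have hIij : s(i, j) ∈ I := by
              by_contra hij
              exact htrans 0 j i hj h0j (by rw [symmI]; exact hij) h0i
            simp only [hw, if_pos hi, if_pos hj, if_pos h0i, if_neg h0j, hIij, iff_true]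
            show e (rep i) * 0 - 1 * 1 ≠ 0
            norm_num
        · by_cases h0j : s(0, j) ∈ I
          · -- i class 0, j non-class-0
            have hIij : s(i, j) ∈ I := by
              by_contra hij
              exact htrans 0 i j hi h0i hij h0j
            simp only [hw, if_pos hi, if_pos hj, if_neg h0i, if_pos h0j, hIij, iff_true]
            show 1 * 1 - e (rep j) * 0 ≠ 0
            norm_num
          · -- both class 0
            have hi0 : s(i, 0) ∉ I := by rw [symmI]; exact h0i
            have hij : s(i, j) ∉ I := htrans i 0 j h0V hi0 h0j
            simp only [hw, if_pos hi, if_pos hj, if_neg h0i, if_neg h0j, hij, iff_false,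
              not_not]
            show (1 : K) * 0 - 1 * 0 = 0
            ring
      · -- j isolated
        have hij : s(i, j) ∉ I := fun h => hj (hVsym h)
        simp only [hw, if_neg hj, hij, iff_false, not_not]
        show (w i).1 * 0 - 0 * (w i).2 = 0
        ring
    · -- i isolated
      have hij : s(i, j) ∉ I := fun h => hi (hVsym' h)
      simp only [hw, if_neg hi, hij, iff_false, not_not]
      show (0 : K) * (w j).2 - (w j).1 * 0 = 0
      ring
  refine ⟨fun i => (w i.succ).1, fun i => (w i.succ).2, ?_⟩
  have hux : Fin.cons 1 (fun i => (w i.succ).1) = fun i : Fin (n + 1) => (w i).1 := by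
    funext i
    refine Fin.cases ?_ ?_ i
    · rw [hw0]; simp
    · intro k; simp
  have hvy : Fin.cons 0 (fun i => (w i.succ).2) = fun i : Fin (n + 1) => (w i).2 := by
    funext i
    refine Fin.cases ?_ ?_ i
    · rw [hw0]; simp
    · intro k; simp
  intro i j
  rw [wedge, hux, hvy]
  exact key i j
end

section
/- If a subset I of the 2-element subsets of {0,...,n} is a Y-set (i.e., there is a decomposable 2-vector z in the cone over Gr(2,n+1) with z_{ij} ≠ 0 exactly for {i,j} ∈ I), then I satisfies the exchange property: for {i,j},{k,l} ∈ I, either {j,l} and {i,k} are both in I, or {j,k} and {i,l} are both in I. -/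
/-- A `Ȳ`-set (the support of a decomposable 2-vector in the cone over `Gr(2,n+1)`)
satisfies the exchange property: for `{i,j},{k,l} ∈ I`, either `{j,l},{i,k} ∈ I`
or `{j,k},{i,l} ∈ I`. -/
theorem stmt_6 {K : Type*} [Field K] (n : ℕ) (hn : 3 ≤ n)
    (u v : Fin (n + 1) → K) (I : Set (Sym2 (Fin (n + 1))))
    (hI : ∀ i j : Fin (n + 1), s(i, j) ∈ I ↔ wedge u v i j ≠ 0) :
    ∀ i j k l : Fin (n + 1), s(i, j) ∈ I → s(k, l) ∈ I →
      (s(j, l) ∈ I ∧ s(i, k) ∈ I) ∨ (s(j, k) ∈ I ∧ s(i, l) ∈ I) := by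
  intro i j k l hij hkl
  rw [hI] at hij hkl
  have key : wedge u v i j * wedge u v k l =
      wedge u v i k * wedge u v j l - wedge u v i l * wedge u v j k := by
    unfold wedge; ring
  by_cases h : wedge u v i k * wedge u v j l = 0
  · right
    have h2 : wedge u v i l * wedge u v j k ≠ 0 := by
      intro h3
      exact mul_ne_zero hij hkl (by rw [key, h, h3, sub_zero])
    exact ⟨(hI j k).2 (right_ne_zero_of_mul h2), (hI i l).2 (left_ne_zero_of_mul h2)⟩
  · left
    exact ⟨(hI j l).2 (right_ne_zero_of_mul h), (hI i k).2 (left_ne_zero_of_mul h)⟩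
end

section
/- Let I be a set of 2-element subsets of N_0 = {0,...,n} satisfying the exchange condition (*), and define J := (I ∩ pairs in {1,...,n}) ∪ {{i,j} ⊆ {1,...,n} : {0,i} ∈ I and {0,j} ∈ I}. Then J also satisfies the exchange condition (*) on pairs from {1,...,n}. -/
/-- The set `J = (I ∩ pairs from {1,…,n}) ∪ {{i,j} : {0,i} ∈ I and {0,j} ∈ I}`
associated to a set `I` of 2-element subsets of `{0,…,n}`. -/
def Jset (n : ℕ) (I : Set (Sym2 (Fin (n + 1)))) : Set (Sym2 (Fin (n + 1))) :=
  {e | (e ∈ I ∧ (0 : Fin (n + 1)) ∉ e) ∨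
    ∃ a b : Fin (n + 1), a ≠ 0 ∧ b ≠ 0 ∧ a ≠ b ∧ e = s(a, b) ∧
      s((0 : Fin (n + 1)), a) ∈ I ∧ s((0 : Fin (n + 1)), b) ∈ I}

lemma mem_Jset_iff (n : ℕ) (I : Set (Sym2 (Fin (n + 1))))
    (hdiag : ∀ i : Fin (n + 1), s(i, i) ∉ I) (x y : Fin (n + 1)) :
    s(x, y) ∈ Jset n I ↔ x ≠ 0 ∧ y ≠ 0 ∧ x ≠ y ∧
      (s(x, y) ∈ I ∨ (s((0 : Fin (n+1)), x) ∈ I ∧ s((0 : Fin (n+1)), y) ∈ I)) := by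
  constructor
  · rintro (⟨hI, h0⟩ | ⟨a, b, ha, hb, hab, heq, h0a, h0b⟩)
    · have hx : x ≠ 0 := fun h => h0 (by rw [h]; exact Sym2.mem_mk_left _ _)
      have hy : y ≠ 0 := fun h => h0 (by rw [h]; exact Sym2.mem_mk_right _ _)
      have hxy : x ≠ y := fun h => hdiag y (h ▸ hI)
      exact ⟨hx, hy, hxy, Or.inl hI⟩
    · rw [Sym2.eq_iff] at heq
      rcases heq with ⟨hx, hy⟩ | ⟨hx, hy⟩
      · subst hx; subst hy; exact ⟨ha, hb, hab, Or.inr ⟨h0a, h0b⟩⟩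
      · subst hx; subst hy; exact ⟨hb, ha, fun h => hab h.symm, Or.inr ⟨h0b, h0a⟩⟩
  · rintro ⟨hx, hy, hxy, hI | ⟨h0x, h0y⟩⟩
    · left
      refine ⟨hI, ?_⟩
      rw [Sym2.mem_iff]
      rintro (h | h)
      · exact hx h.symm
      · exact hy h.symm
    · exact Or.inr ⟨x, y, hx, hy, hxy, rfl, h0x, h0y⟩

section Core

variable {n : ℕ} {I : Set (Sym2 (Fin (n + 1)))}

/-- The relation `R x y := s(x,y) ∈ I ∨ (s(0,x) ∈ I ∧ s(0,y) ∈ I)`. -/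
def Rrel (I : Set (Sym2 (Fin (n + 1)))) (x y : Fin (n + 1)) : Prop :=
  s(x, y) ∈ I ∨ (s((0 : Fin (n+1)), x) ∈ I ∧ s((0 : Fin (n+1)), y) ∈ I)

lemma Rrel.symm {x y : Fin (n + 1)} (h : Rrel I x y) : Rrel I y x := by
  rcases h with h | ⟨h1, h2⟩
  · left; rwa [Sym2.eq_swap]
  · exact Or.inr ⟨h2, h1⟩

lemma Rrel.diag {x : Fin (n + 1)} (hdiag : ∀ i : Fin (n + 1), s(i, i) ∉ I)
    (h : Rrel I x x) : s((0 : Fin (n+1)), x) ∈ I := by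
  rcases h with h | ⟨h1, _⟩
  · exact absurd h (hdiag x)
  · exact h1

lemma core_exchange (hdiag : ∀ i : Fin (n + 1), s(i, i) ∉ I)
    (hex : ∀ i j k l : Fin (n + 1), s(i, j) ∈ I → s(k, l) ∈ I →
      (s(j, l) ∈ I ∧ s(i, k) ∈ I) ∨ (s(j, k) ∈ I ∧ s(i, l) ∈ I))
    (i j k l : Fin (n + 1)) (hij : Rrel I i j) (hkl : Rrel I k l) :
    (Rrel I j l ∧ Rrel I i k) ∨ (Rrel I j k ∧ Rrel I i l) := by
  rcases hij with hij | ⟨h0i, h0j⟩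
  · rcases hkl with hkl | ⟨h0k, h0l⟩
    · -- both in I: use hex directly
      rcases hex i j k l hij hkl with ⟨h1, h2⟩ | ⟨h1, h2⟩
      · exact Or.inl ⟨Or.inl h1, Or.inl h2⟩
      · exact Or.inr ⟨Or.inl h1, Or.inl h2⟩
    · -- s(i,j) ∈ I, P k ∧ P l
      rcases hex i j 0 k hij h0k with ⟨h1, h2⟩ | ⟨h1, h2⟩
      · -- s(j,k) ∈ I, s(i,0) ∈ I
        refine Or.inr ⟨Or.inl h1, Or.inr ⟨?_, h0l⟩⟩
        rwa [Sym2.eq_swap] at h2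
      · -- s(j,0) ∈ I, s(i,k) ∈ I
        refine Or.inl ⟨Or.inr ⟨?_, h0l⟩, Or.inl h2⟩
        rwa [Sym2.eq_swap] at h1
  · rcases hkl with hkl | ⟨h0k, h0l⟩
    · -- P i ∧ P j, s(k,l) ∈ I
      rcases hex k l 0 i hkl h0i with ⟨h1, h2⟩ | ⟨h1, h2⟩
      · -- s(l,i) ∈ I, s(k,0) ∈ I
        refine Or.inr ⟨Or.inr ⟨h0j, ?_⟩, Or.inl (by rwa [Sym2.eq_swap] at h1)⟩
        rwa [Sym2.eq_swap] at h2
      · -- s(l,0) ∈ I, s(k,i) ∈ I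
        refine Or.inl ⟨Or.inr ⟨h0j, ?_⟩, Or.inl (by rwa [Sym2.eq_swap] at h2)⟩
        rwa [Sym2.eq_swap] at h1
    · exact Or.inl ⟨Or.inr ⟨h0j, h0l⟩, Or.inr ⟨h0i, h0k⟩⟩

end Core

/-- If `I` satisfies the exchange condition (*), then so does
`J = (I ∩ pairs from {1,…,n}) ∪ {{i,j} : {0,i},{0,j} ∈ I}`. -/
theorem stmt_7 (n : ℕ) (I : Set (Sym2 (Fin (n + 1))))
    (hdiag : ∀ i : Fin (n + 1), s(i, i) ∉ I)
    (hex : ∀ i j k l : Fin (n + 1), s(i, j) ∈ I → s(k, l) ∈ I →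
      (s(j, l) ∈ I ∧ s(i, k) ∈ I) ∨ (s(j, k) ∈ I ∧ s(i, l) ∈ I)) :
    ∀ i j k l : Fin (n + 1), s(i, j) ∈ Jset n I → s(k, l) ∈ Jset n I →
      (s(j, l) ∈ Jset n I ∧ s(i, k) ∈ Jset n I) ∨
      (s(j, k) ∈ Jset n I ∧ s(i, l) ∈ Jset n I) := by
  intro i j k l hij hkl
  rw [mem_Jset_iff n I hdiag] at hij hkl
  simp only [mem_Jset_iff n I hdiag]
  obtain ⟨hi0, hj0, hij', hRij⟩ := hij
  obtain ⟨hk0, hl0, hkl', hRkl⟩ := hkl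
  have hRij : Rrel I i j := hRij
  have hRkl : Rrel I k l := hRkl
  rcases core_exchange hdiag hex i j k l hRij hRkl with ⟨h1, h2⟩ | ⟨h1, h2⟩
  · -- R j l and R i k
    by_cases hjl : j = l
    · -- use second disjunct: Q j k ∧ Q i l
      subst hjl
      have hPj : s((0 : Fin (n+1)), j) ∈ I := h1.diag hdiag
      refine Or.inr ⟨⟨hj0, hk0, fun h => hkl' h.symm, ?_⟩, ⟨hi0, hj0, hij', hRij⟩⟩
      rcases hRkl with h | ⟨hk, hl⟩
      · exact Or.inl (by rwa [Sym2.eq_swap] at h)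
      · exact Or.inr ⟨hPj, hk⟩
    · by_cases hik : i = k
      · subst hik
        have hPi : s((0 : Fin (n+1)), i) ∈ I := h2.diag hdiag
        exact Or.inr ⟨⟨hj0, hi0, fun h => hij' h.symm, hRij.symm⟩,
          ⟨hi0, hl0, hkl', hRkl⟩⟩
      · exact Or.inl ⟨⟨hj0, hl0, hjl, h1⟩, ⟨hi0, hk0, hik, h2⟩⟩
  · -- R j k and R i l
    by_cases hjk : j = k
    · subst hjk
      have hPj : s((0 : Fin (n+1)), j) ∈ I := h1.diag hdiag
      exact Or.inl ⟨⟨hj0, hl0, hkl', hRkl⟩, ⟨hi0, hj0, hij', hRij⟩⟩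
    · by_cases hil : i = l
      · subst hil
        have hPi : s((0 : Fin (n+1)), i) ∈ I := h2.diag hdiag
        refine Or.inl ⟨⟨hj0, hi0, fun h => hij' h.symm, hRij.symm⟩,
          ⟨hi0, hk0, fun h => hkl' h.symm, ?_⟩⟩
        exact hRkl.symm
      · exact Or.inr ⟨⟨hj0, hk0, hjk, h1⟩, ⟨hi0, hl0, hil, h2⟩⟩
end

section
/- For the cone Ω* = cone(e_i + e_j : 1 ≤ i < j ≤ n) ⊆ Q^n, a point x ∈ Q^n_{≥0} lies in Ω* if and only if x_i ≤ Σ_{j ≠ i} x_j for every i ∈ {1,...,n}. -/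
open Finset

/-- The convex cone generated by a set of vectors: all finite nonnegative
rational linear combinations. -/
def coneOf {m : ℕ} (S : Set (Fin m → ℚ)) : Set (Fin m → ℚ) :=
  {x | ∃ (r : ℕ) (c : Fin r → ℚ) (v : Fin r → Fin m → ℚ),
    (∀ i, 0 ≤ c i) ∧ (∀ i, v i ∈ S) ∧ x = ∑ i, c i • v i}

def Gen (n : ℕ) : Set (Fin n → ℚ) :=
  {w | ∃ i j : Fin n, i ≠ j ∧ w = Pi.single i (1 : ℚ) + Pi.single j (1 : ℚ)}

lemma coneOf_zero {m : ℕ} (S : Set (Fin m → ℚ)) : 0 ∈ coneOf S :=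
  ⟨0, ![], ![], fun i => i.elim0, fun i => i.elim0, by simp⟩

lemma coneOf_add {m : ℕ} {S : Set (Fin m → ℚ)} {x y : Fin m → ℚ}
    (hx : x ∈ coneOf S) (hy : y ∈ coneOf S) : x + y ∈ coneOf S := by
  obtain ⟨r1, c1, v1, hc1, hv1, hx⟩ := hx
  obtain ⟨r2, c2, v2, hc2, hv2, hy⟩ := hy
  refine ⟨r1 + r2, Fin.append c1 c2, Fin.append v1 v2, ?_, ?_, ?_⟩
  · intro i
    induction i using Fin.addCases with
    | left i => simpa [Fin.append_left] using hc1 i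
    | right i => simpa [Fin.append_right] using hc2 i
  · intro i
    induction i using Fin.addCases with
    | left i => simpa [Fin.append_left] using hv1 i
    | right i => simpa [Fin.append_right] using hv2 i
  · rw [Fin.sum_univ_add]
    simp only [Fin.append_left, Fin.append_right]
    rw [hx, hy]

lemma coneOf_smul_mem {m : ℕ} {S : Set (Fin m → ℚ)} {v : Fin m → ℚ}
    (hv : v ∈ S) {t : ℚ} (ht : 0 ≤ t) : t • v ∈ coneOf S :=
  ⟨1, fun _ => t, fun _ => v, fun _ => ht, fun _ => hv, by simp⟩

lemma coneOf_sum {m : ℕ} {S : Set (Fin m → ℚ)} {ι : Type*} [DecidableEq ι]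
    (s : Finset ι) (f : ι → Fin m → ℚ)
    (h : ∀ i ∈ s, f i ∈ coneOf S) : ∑ i ∈ s, f i ∈ coneOf S := by
  induction s using Finset.induction with
  | empty => simpa using coneOf_zero S
  | insert _ _ hnot ih =>
    rw [Finset.sum_insert hnot]
    exact coneOf_add (h _ (mem_insert_self _ _))
      (ih fun i hi => h i (mem_insert_of_mem hi))

lemma case_eq {n : ℕ} (x : Fin n → ℚ) (hx : ∀ i, 0 ≤ x i) (m : Fin n)
    (hm : x m = ∑ j ∈ univ.erase m, x j) : x ∈ coneOf (Gen n) := by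
  have hxe : x = ∑ j ∈ univ.erase m,
      x j • (Pi.single m (1 : ℚ) + Pi.single j (1 : ℚ)) := by
    funext l
    rw [Finset.sum_apply]
    by_cases hl : l = m
    · subst hl
      rw [hm]
      refine Finset.sum_congr rfl fun j hj => ?_
      have hjm : j ≠ l := ne_of_mem_erase hj
      simp [Pi.single_apply, hjm]
    · rw [Finset.sum_eq_single l]
      · simp [Pi.single_apply, Ne.symm hl]
      · intro j hj hjl
        simp [Pi.single_apply, Ne.symm hl, Ne.symm hjl]
      · intro hlm
        exact absurd (Finset.mem_erase.mpr ⟨hl, mem_univ l⟩) hlm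
  rw [hxe]
  refine coneOf_sum _ _ fun j hj => coneOf_smul_mem ?_ (hx j)
  exact ⟨m, j, (ne_of_mem_erase hj).symm, rfl⟩

lemma main_aux {n : ℕ} : ∀ (k : ℕ) (x : Fin n → ℚ), (∀ i, 0 ≤ x i) →
    (∀ i, 2 * x i ≤ ∑ j, x j) → (univ.filter (fun i => x i ≠ 0)).card ≤ k →
    x ∈ coneOf (Gen n) := by
  intro k
  induction k with
  | zero =>
    intro x hx hcond hcard
    have hz : ∀ i, x i = 0 := by
      intro i
      by_contra h
      have : i ∈ univ.filter (fun i => x i ≠ 0) := by simp [h]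
      have := Finset.card_pos.mpr ⟨i, this⟩
      omega
    have : x = 0 := funext hz
    rw [this]; exact coneOf_zero _
  | succ k ih =>
    intro x hx hcond hcard
    by_cases hzero : ∀ i, x i = 0
    · rw [funext hzero]; exact coneOf_zero _
    push_neg at hzero
    by_cases heq : ∃ m, 2 * x m = ∑ j, x j
    · obtain ⟨m, hm⟩ := heq
      refine case_eq x hx m ?_
      rw [Finset.sum_erase_eq_sub (mem_univ m)]
      linarith
    push_neg at heq
    obtain ⟨i, hi⟩ := hzero
    have hxi : 0 < x i := lt_of_le_of_ne (hx i) (Ne.symm hi)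
    set S := ∑ l, x l with hSdef
    have hstrict : ∀ m, 2 * x m < S := fun m => lt_of_le_of_ne (hcond m) (heq m)
    have hiS : x i < S := by have := hstrict i; linarith
    have hexj : ∃ j, j ≠ i ∧ 0 < x j := by
      by_contra h
      push_neg at h
      have hz : ∑ j ∈ univ.erase i, x j = 0 :=
        Finset.sum_eq_zero fun j hj =>
          le_antisymm (h j (ne_of_mem_erase hj)) (hx j)
      have : ∑ j ∈ univ.erase i, x j = S - x i :=
        Finset.sum_erase_eq_sub (mem_univ i)
      linarith
    obtain ⟨j, hji, hxj⟩ := hexj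
    classical
    set g : Fin n → ℚ := fun m => if m = i ∨ m = j then x i ⊓ x j else (S - 2 * x m) / 2
      with hg
    have hne : (univ : Finset (Fin n)).Nonempty := ⟨i, mem_univ i⟩
    set t := univ.inf' hne g with ht
    have htpos : 0 < t := by
      rw [ht, Finset.lt_inf'_iff]
      intro m _
      rw [hg]
      dsimp only
      split
      · exact lt_min hxi hxj
      · have := hstrict m; linarith
    have hgi : g i = x i ⊓ x j := by simp [hg]
    have hgj : g j = x i ⊓ x j := by simp [hg]
    have hti : t ≤ x i := (Finset.inf'_le g (mem_univ i)).trans (by rw [hgi]; exact inf_le_left)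
    have htj : t ≤ x j := (Finset.inf'_le g (mem_univ j)).trans (by rw [hgj]; exact inf_le_right)
    have htm : ∀ m, m ≠ i → m ≠ j → t ≤ (S - 2 * x m) / 2 := by
      intro m h1 h2
      refine (Finset.inf'_le g (mem_univ m)).trans ?_
      rw [hg]
      simp [h1, h2]
    set v : Fin n → ℚ := Pi.single i (1 : ℚ) + Pi.single j (1 : ℚ) with hv
    have hvi : v i = 1 := by simp [hv, Pi.single_apply, hji.symm]
    have hvj : v j = 1 := by simp [hv, Pi.single_apply, hji]
    have hvm : ∀ m, m ≠ i → m ≠ j → v m = 0 := by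
      intro m h1 h2; simp [hv, Pi.single_apply, h1, h2]
    set y : Fin n → ℚ := x - t • v with hy
    have hyi : y i = x i - t := by simp [hy, hvi]
    have hyj : y j = x j - t := by simp [hy, hvj]
    have hym : ∀ m, m ≠ i → m ≠ j → y m = x m := by
      intro m h1 h2; simp [hy, hvm m h1 h2]
    have hynn : ∀ m, 0 ≤ y m := by
      intro m
      by_cases h1 : m = i
      · subst h1; rw [hyi]; linarith
      by_cases h2 : m = j
      · subst h2; rw [hyj]; linarith
      · rw [hym m h1 h2]; exact hx m
    have hvsum : ∑ m, v m = 2 := by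
      rw [hv]
      simp only [Pi.add_apply]
      rw [Finset.sum_add_distrib]
      simp [Pi.single_apply]
      norm_num
    have hysum : ∑ m, y m = S - 2 * t := by
      rw [hy]
      simp only [Pi.sub_apply, Pi.smul_apply, smul_eq_mul]
      rw [Finset.sum_sub_distrib, ← Finset.mul_sum, hvsum]
      rw [← hSdef]; ring
    have hycond : ∀ m, 2 * y m ≤ ∑ l, y l := by
      intro m
      rw [hysum]
      by_cases h1 : m = i
      · subst h1; rw [hyi]; have := hcond m; linarith
      by_cases h2 : m = j
      · subst h2; rw [hyj]; have := hcond m; linarith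
      · rw [hym m h1 h2]; have := htm m h1 h2; linarith
    have hxy : x = y + t • v := by rw [hy]; ring_nf
    obtain ⟨m0, _, hm0⟩ := Finset.exists_mem_eq_inf' hne g
    have hymem : y ∈ coneOf (Gen n) := by
      by_cases hm0ij : m0 = i ∨ m0 = j
      · -- t = x i ⊓ x j, so y i = 0 or y j = 0; support shrinks
        have htval : t = x i ⊓ x j := by
          rcases hm0ij with h | h
          · subst h; rw [ht, hm0, hgi]
          · subst h; rw [ht, hm0, hgj]
        have hyz : y i = 0 ∨ y j = 0 := by
          rcases min_cases (x i) (x j) with ⟨hmin, _⟩ | ⟨hmin, _⟩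
          · left; rw [hyi, htval, hmin]; ring
          · right; rw [hyj, htval, hmin]; ring
        rcases hyz with hz | hz
        · refine ih y hynn hycond ?_
          have hsub : univ.filter (fun m => y m ≠ 0) ⊆
              (univ.filter (fun m => x m ≠ 0)).erase i := by
            intro m hm
            rw [Finset.mem_filter] at hm
            have hmi : m ≠ i := by
              intro h; subst h; exact hm.2 hz
            refine Finset.mem_erase.mpr ⟨hmi, Finset.mem_filter.mpr ⟨mem_univ m, ?_⟩⟩
            by_cases h2 : m = j
            · subst h2; exact ne_of_gt hxj
            · rw [← hym m hmi h2]; exact hm.2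
          have h1 : i ∈ univ.filter (fun m => x m ≠ 0) := by simp [hi]
          have := Finset.card_le_card hsub
          rw [Finset.card_erase_of_mem h1] at this
          omega
        · refine ih y hynn hycond ?_
          have hsub : univ.filter (fun m => y m ≠ 0) ⊆
              (univ.filter (fun m => x m ≠ 0)).erase j := by
            intro m hm
            rw [Finset.mem_filter] at hm
            have hmj : m ≠ j := by
              intro h; subst h; exact hm.2 hz
            refine Finset.mem_erase.mpr ⟨hmj, Finset.mem_filter.mpr ⟨mem_univ m, ?_⟩⟩
            by_cases h1 : m = i
            · subst h1; exact ne_of_gt hxi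
            · rw [← hym m h1 hmj]; exact hm.2
          have h1 : j ∈ univ.filter (fun m => x m ≠ 0) := by
            simp [ne_of_gt hxj]
          have := Finset.card_le_card hsub
          rw [Finset.card_erase_of_mem h1] at this
          omega
      · push_neg at hm0ij
        have htval : t = (S - 2 * x m0) / 2 := by
          rw [ht, hm0, hg]; simp [hm0ij.1, hm0ij.2]
        refine case_eq y hynn m0 ?_
        rw [Finset.sum_erase_eq_sub (mem_univ m0), hysum,
          hym m0 hm0ij.1 hm0ij.2]
        rw [htval]; ring
    rw [hxy]
    exact coneOf_add hymem
      (coneOf_smul_mem (show v ∈ Gen n from ⟨i, j, Ne.symm hji, hv⟩) (le_of_lt htpos))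

/-- A point `x` of the nonnegative orthant of `ℚⁿ` lies in
`Ω* = cone(eᵢ + eⱼ : i ≠ j)` if and only if `xᵢ ≤ Σ_{j ≠ i} xⱼ` for every `i`. -/
theorem stmt_9 (n : ℕ) (hn : 2 ≤ n) (x : Fin n → ℚ) (hx : ∀ i, 0 ≤ x i) :
    x ∈ coneOf {w | ∃ i j : Fin n, i ≠ j ∧
        w = Pi.single i (1 : ℚ) + Pi.single j (1 : ℚ)}
    ↔ ∀ i : Fin n, x i ≤ ∑ j ∈ univ.erase i, x j := by
  constructor
  · rintro ⟨r, c, v, hc, hv, hxeq⟩ i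
    rw [Finset.sum_erase_eq_sub (mem_univ i)]
    have hv1 : ∀ k, (∀ l, 0 ≤ v k l ∧ v k l ≤ 1) ∧ ∑ l, v k l = 2 := by
      intro k
      obtain ⟨a, b, hab, hkv⟩ := hv k
      constructor
      · intro l
        rw [hkv]
        simp only [Pi.add_apply, Pi.single_apply]
        constructor
        · split_ifs <;> norm_num
        · split_ifs with h1 h2
          · exact absurd (h1.symm.trans h2) hab
          all_goals norm_num
      · rw [hkv]
        simp only [Pi.add_apply]
        rw [Finset.sum_add_distrib]
        simp [Pi.single_apply]
        norm_num
    have hxl : ∀ l, x l = ∑ k, c k * v k l := by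
      intro l
      rw [hxeq]
      simp [Finset.sum_apply]
    have hS : ∑ l, x l = ∑ k, 2 * c k := by
      rw [Finset.sum_congr rfl fun l _ => hxl l, Finset.sum_comm]
      refine Finset.sum_congr rfl fun k _ => ?_
      rw [← Finset.mul_sum, (hv1 k).2]; ring
    have hle : x i ≤ ∑ k, c k := by
      rw [hxl i]
      refine Finset.sum_le_sum fun k _ => ?_
      have := (hv1 k).1 i
      nlinarith [hc k]
    have : ∑ k, 2 * c k = 2 * ∑ k, c k := by rw [Finset.mul_sum]
    linarith [hS, hle, this ▸ hS]
  · intro hcond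
    have hcond' : ∀ i, 2 * x i ≤ ∑ j, x j := by
      intro i
      have := hcond i
      rw [Finset.sum_erase_eq_sub (mem_univ i)] at this
      linarith
    exact main_aux (univ.filter (fun i => x i ≠ 0)).card x hx hcond' le_rfl
end

section
/- For a nonzero y ∈ K^n and the affine subspace W_y := e_0 ∧ (0,y) + ⋀²({0}×K^n) ⊆ ⋀²K^{n+1}, the linear map κ(·, y) : K^n → ⋀²K^{n+1}, x ↦ (1,x) ∧ (0,y), has image exactly W_y ∩ Ȳ, where Ȳ is the set of decomposable 2-vectors; moreover κ(·,y) has rank n − 1. -/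
lemma wedge_decomp {K : Type*} [Field K] {m : ℕ} (u v : Fin (m+1) → K)
    (h : u 0 ≠ 0 ∨ v 0 ≠ 0) :
    ∃ a : Fin (m+1) → K, a 0 = 1 ∧
      wedge u v = wedge a (fun j => u 0 * v j - u j * v 0) := by
  rcases h with h | h
  · refine ⟨(u 0)⁻¹ • u, by simp [h], ?_⟩
    funext i j
    simp only [wedge, Pi.smul_apply, smul_eq_mul]
    field_simp
    ring
  · refine ⟨(v 0)⁻¹ • v, by simp [h], ?_⟩
    funext i j
    simp only [wedge, Pi.smul_apply, smul_eq_mul]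
    field_simp
    ring

def wedgeL {K : Type*} [Field K] (n : ℕ) (y : Fin n → K) :
    (Fin n → K) →ₗ[K] (Fin (n+1) → Fin (n+1) → K) where
  toFun x := wedge (Fin.cons (0 : K) x) (Fin.cons (0 : K) y)
  map_add' x x' := by
    funext i j
    induction i using Fin.cases <;> induction j using Fin.cases <;>
      simp [wedge, Fin.cons_zero, Fin.cons_succ] <;> ring
  map_smul' c x := by
    funext i j
    induction i using Fin.cases <;> induction j using Fin.cases <;>
      simp [wedge, Fin.cons_zero, Fin.cons_succ] <;> ring

lemma ker_wedgeL {K : Type*} [Field K] (n : ℕ) (y : Fin n → K) (hy : y ≠ 0) :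
    LinearMap.ker (wedgeL n y) = Submodule.span K {y} := by
  obtain ⟨j0, hj0⟩ : ∃ j, y j ≠ 0 := by
    by_contra h
    push_neg at h
    exact hy (funext h)
  ext x
  rw [LinearMap.mem_ker, Submodule.mem_span_singleton]
  constructor
  · intro h
    refine ⟨x j0 / y j0, funext fun i => ?_⟩
    have := congrFun (congrFun h i.succ) j0.succ
    simp only [wedgeL, LinearMap.coe_mk, AddHom.coe_mk, wedge, Fin.cons_succ,
      Pi.zero_apply] at this
    rw [Pi.smul_apply, smul_eq_mul, div_mul_eq_mul_div, div_eq_iff hj0]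
    linear_combination -this
  · rintro ⟨c, rfl⟩
    funext i j
    simp only [wedgeL, LinearMap.coe_mk, AddHom.coe_mk, wedge, Pi.zero_apply]
    induction i using Fin.cases <;> induction j using Fin.cases <;>
      simp [Fin.cons_zero, Fin.cons_succ] <;> ring

/-- For nonzero `y ∈ Kⁿ`, the map `κ(·,y) : x ↦ (1,x) ∧ (0,y)` has image exactly
`W_y ∩ Ȳ`, where `W_y = e₀ ∧ (0,y) + ⋀²({0}×Kⁿ)` (alternating 2-tensors whose
`0`-th row is `(0,y)`) and `Ȳ` is the set of decomposable 2-vectors; moreover its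
linear part `x ↦ (0,x) ∧ (0,y)` has rank `n − 1`. -/
theorem stmt_19 {K : Type*} [Field K] (n : ℕ) (hn : 2 ≤ n)
    (y : Fin n → K) (hy : y ≠ 0) :
    (Set.range (fun x : Fin n → K => wedge (Fin.cons 1 x) (Fin.cons (0 : K) y))
      = {z : Fin (n + 1) → Fin (n + 1) → K |
            (∀ i j, z j i = - z i j) ∧ (∀ i, z i i = 0) ∧
            (∀ j : Fin n, z 0 j.succ = y j) ∧ z 0 0 = 0}
        ∩ {z | ∃ u v : Fin (n + 1) → K, z = wedge u v})
    ∧ Module.finrank K (Submodule.span K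
        (Set.range (fun x : Fin n → K => wedge (Fin.cons (0 : K) x) (Fin.cons (0 : K) y))))
      = n - 1 := by
  constructor
  · ext z
    constructor
    · rintro ⟨x, rfl⟩
      refine ⟨⟨?_, ?_, ?_, ?_⟩, Fin.cons 1 x, Fin.cons 0 y, rfl⟩
      · intro i j; simp [wedge]
      · intro i; simp [wedge]
      · intro j; simp [wedge, Fin.cons_zero, Fin.cons_succ]
      · simp [wedge]
    · rintro ⟨⟨hanti, hdiag, hrow, h00⟩, u, v, rfl⟩
      have hw : (fun j => u 0 * v j - u j * v 0) = Fin.cons (0:K) y := by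
        funext j
        induction j using Fin.cases with
        | zero => simp [Fin.cons_zero]
        | succ j => simpa [wedge, Fin.cons_succ] using hrow j
      have hne : u 0 ≠ 0 ∨ v 0 ≠ 0 := by
        by_contra h
        push_neg at h
        apply hy
        funext j
        have := congrFun hw j.succ
        simp [h.1, h.2, Fin.cons_succ] at this
        exact this.symm
      obtain ⟨a, ha0, hav⟩ := wedge_decomp u v hne
      refine ⟨Fin.tail a, ?_⟩
      have hca : Fin.cons (1:K) (Fin.tail a) = a := by
        rw [← ha0]; exact Fin.cons_self_tail a
      show wedge (Fin.cons 1 (Fin.tail a)) (Fin.cons (0:K) y) = wedge u v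
      rw [hav, ← hw, hca]
  · have h1 : (Set.range (fun x : Fin n → K => wedge (Fin.cons (0:K) x) (Fin.cons (0:K) y)))
        = Set.range (wedgeL n y) := rfl
    rw [h1, ← LinearMap.coe_range, Submodule.span_eq]
    have h2 := LinearMap.finrank_range_add_finrank_ker (wedgeL n y)
    rw [ker_wedgeL n y hy, finrank_span_singleton hy] at h2
    simp [Module.finrank_pi] at h2
    omega
end
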